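/- Let N ≥ 1 and let Π ⊆ ℤ_{≥0}^N be finite and monotone, contain c·e^{(i)} for every i ∈ {1, …, N} for some integer c ≥ 1, and have at least two distinct maximal elements. Let K = conv(Π), Λ = {x ∈ ℝ_{≥0}^N : x_i < y_i for all i, for some y ∈ K}, and for ε ∈ (0,1) and μ⁰ ∈ K let Γ⁺(μ⁰) = {λ ∈ ℝ_{≥0}^N : λ ≤ (1−ε)μ + εμ⁰ componentwise for some μ ∈ K} and ρ(ε, μ⁰) = sup{ρ > 0 : ρΛ ⊆ Γ⁺(μ⁰)}. Then for every ε ∈ (0,1) there exists a constant ρ(ε, Π) < 1, depending only on ε and Π, such that ρ(ε, μ⁰) ≤ ρ(ε, Π) for all μ⁰ ∈ K; equivalently, sup_{μ⁰ ∈ K} ρ(ε, μ⁰) < 1. -/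

import Mathlib

open Pointwise

/-- The maximum capacity region `Λ`: nonnegative vectors strictly dominated
(componentwise) by some point of `conv(Π)`. -/
def maxCapRegion (N : ℕ) (Sched : Set (Fin N → ℝ)) : Set (Fin N → ℝ) :=
  {x | (∀ i, 0 ≤ x i) ∧ ∃ y ∈ convexHull ℝ Sched, ∀ i, x i < y i}

/-- The region `Γ⁺(μ⁰)`: nonnegative vectors dominated (componentwise) by
`(1−ε)μ + εμ⁰` for some `μ ∈ conv(Π)`. -/
def mixRegion (N : ℕ) (Sched : Set (Fin N → ℝ)) (ε : ℝ) (μ₀ : Fin N → ℝ) :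
    Set (Fin N → ℝ) :=
  {l | (∀ i, 0 ≤ l i) ∧ ∃ μ ∈ convexHull ℝ Sched, l ≤ (1 - ε) • μ + ε • μ₀}

/-- The shrinkage factor `ρ(ε, μ⁰) = sup{ρ > 0 : ρΛ ⊆ Γ⁺(μ⁰)}`. -/
noncomputable def shrinkFactor (N : ℕ) (Sched : Set (Fin N → ℝ)) (ε : ℝ)
    (μ₀ : Fin N → ℝ) : ℝ :=
  sSup {ρ : ℝ | 0 < ρ ∧ ρ • maxCapRegion N Sched ⊆ mixRegion N Sched ε μ₀}

/-- under the paper's assumptions on the schedule set, for every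
`ε ∈ (0,1)` there is a uniform constant `ρ(ε, Π) < 1`, depending only on `ε` and
`Π`, bounding `ρ(ε, μ⁰)` for every `μ⁰ ∈ conv(Π)`. -/
theorem uniform_capacity_shrinkage_lt_one
    (N : ℕ) (hN : 1 ≤ N) (Sched : Set (Fin N → ℝ))
    (hfin : Sched.Finite)
    (hint : ∀ d ∈ Sched, ∀ i, ∃ m : ℕ, d i = (m : ℝ))
    (hmono : ∀ d ∈ Sched, ∀ d' : Fin N → ℝ,
      (∀ i, ∃ m : ℕ, d' i = (m : ℝ)) → d' ≤ d → d' ∈ Sched)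
    (c : ℕ) (hc : 1 ≤ c)
    (hunit : ∀ i : Fin N, Pi.single i (c : ℝ) ∈ Sched)
    (htwo : ∃ d₁ ∈ Sched, ∃ d₂ ∈ Sched, d₁ ≠ d₂ ∧
      (∀ y ∈ Sched, d₁ ≤ y → d₁ = y) ∧ (∀ y ∈ Sched, d₂ ≤ y → d₂ = y))
    (ε : ℝ) (hε : ε ∈ Set.Ioo (0 : ℝ) 1) :
    ∃ ρbar : ℝ, ρbar < 1 ∧
      ∀ μ₀ ∈ convexHull ℝ Sched, shrinkFactor N Sched ε μ₀ ≤ ρbar := by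
  obtain ⟨hε0, hε1⟩ := hε
  obtain ⟨d₁, hd₁, d₂, hd₂, hne, hmax₁, hmax₂⟩ := htwo
  have hNpos : 0 < N := hN
  have : Nonempty (Fin N) := ⟨⟨0, hNpos⟩⟩
  have hU : (Finset.univ : Finset (Fin N)).Nonempty := Finset.univ_nonempty
  have hcpos : (0 : ℝ) < c := by exact_mod_cast Nat.lt_of_lt_of_le Nat.zero_lt_one hc
  have hTne : hfin.toFinset.Nonempty :=
    ⟨Pi.single ⟨0, hNpos⟩ (c : ℝ), hfin.mem_toFinset.2 (hunit _)⟩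
  -- componentwise maxima
  set M : Fin N → ℝ := fun k => hfin.toFinset.sup' hTne (fun d => d k) with hMdef
  have hMub : ∀ d ∈ Sched, ∀ k, d k ≤ M k := fun d hd k =>
    Finset.le_sup' (fun d => d k) (hfin.mem_toFinset.2 hd)
  have hMpos : ∀ k, 0 < M k := by
    intro k
    have h1 := hMub _ (hunit k) k
    rw [Pi.single_eq_same] at h1
    linarith
  -- every point of the hull lies below M componentwise
  have hboxconv : Convex ℝ {x : Fin N → ℝ | ∀ k, x k ≤ M k} := by
    intro x hx y hy a b ha hb hab k
    have h1 := hx k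
    have h2 := hy k
    simp only [Pi.add_apply, Pi.smul_apply, smul_eq_mul]
    calc a * x k + b * y k ≤ a * M k + b * M k := by
          exact add_le_add (mul_le_mul_of_nonneg_left h1 ha)
            (mul_le_mul_of_nonneg_left h2 hb)
      _ = M k := by rw [← add_mul, hab, one_mul]
  have hK_le : ∀ x ∈ convexHull ℝ Sched, ∀ k, x k ≤ M k :=
    fun x hx => convexHull_min (fun d hd k => hMub d hd k) hboxconv hx
  -- nonnegativity of schedules
  have hSnn : ∀ d ∈ Sched, ∀ i, (0 : ℝ) ≤ d i := by
    intro d hd i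
    obtain ⟨m, hm⟩ := hint d hd i
    rw [hm]
    positivity
  -- M is not in the hull
  have hMnotK : M ∉ convexHull ℝ Sched := by
    intro hM
    obtain ⟨ι, _, w, z, hw0, hw1, hz, hsum⟩ := mem_convexHull_iff_exists_fintype.1 hM
    obtain ⟨i0, hi0pos⟩ : ∃ i, 0 < w i := by
      by_contra h
      push_neg at h
      have hz0 : ∑ i, w i = 0 :=
        Finset.sum_eq_zero fun i _ => le_antisymm (h i) (hw0 i)
      rw [hw1] at hz0
      norm_num at hz0
    have hz_eq : z i0 = M := by
      funext k
      have hsumk : ∑ i, w i * z i k = M k := by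
        have := congrFun hsum k
        simpa [Finset.sum_apply, Pi.smul_apply, smul_eq_mul] using this
      have hsum2 : ∑ i, w i * (M k - z i k) = 0 := by
        have hexp : ∑ i, w i * (M k - z i k)
            = (∑ i, w i) * M k - ∑ i, w i * z i k := by
          rw [Finset.sum_mul, ← Finset.sum_sub_distrib]
          congr 1
          funext i
          ring
        rw [hexp, hw1, hsumk]
        ring
      have hall := (Finset.sum_eq_zero_iff_of_nonneg
        (fun i _ => mul_nonneg (hw0 i) (sub_nonneg.2 (hMub _ (hz i) k)))).1 hsum2
        i0 (Finset.mem_univ _)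
      rcases mul_eq_zero.1 hall with h | h
      · exact absurd h (ne_of_gt hi0pos)
      · linarith [sub_eq_zero.1 h]
    have hMS : M ∈ Sched := hz_eq ▸ hz i0
    have e1 := hmax₁ M hMS (fun k => hMub d₁ hd₁ k)
    have e2 := hmax₂ M hMS (fun k => hMub d₂ hd₂ k)
    exact hne (e1.trans e2.symm)
  -- compactness and the function h
  have hKcpt : IsCompact (convexHull ℝ Sched) := hfin.isCompact_convexHull ℝ
  have hKne : (convexHull ℝ Sched).Nonempty :=
    ⟨_, subset_convexHull ℝ _ (hunit ⟨0, hNpos⟩)⟩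
  set h : (Fin N → ℝ) → ℝ := fun x => Finset.univ.inf' hU (fun k => x k / M k)
    with hhdef
  have hcont : Continuous h :=
    Continuous.finset_inf'_apply hU (fun k _ => (continuous_apply k).div_const _)
  obtain ⟨xs, hxsK, hxsmax⟩ := hKcpt.exists_isMaxOn hKne hcont.continuousOn
  set s : ℝ := h xs with hsdef
  -- the strictly positive point u in the hull
  have hu : (fun _ : Fin N => (c : ℝ) / N) ∈ convexHull ℝ Sched := by
    apply mem_convexHull_iff_exists_fintype.2
    refine ⟨Fin N, inferInstance, fun _ => (N : ℝ)⁻¹, fun i => Pi.single i (c : ℝ),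
      fun _ => by positivity, ?_, fun i => hunit i, ?_⟩
    · rw [Finset.sum_const, Finset.card_univ, Fintype.card_fin, nsmul_eq_mul]
      field_simp
    · rw [← Finset.smul_sum, Finset.univ_sum_single (fun _ : Fin N => (c : ℝ))]
      funext j
      simp [div_eq_inv_mul]
  have hspos : 0 < s := by
    have hle : h (fun _ : Fin N => (c : ℝ) / N) ≤ s := hxsmax hu
    have hpos : 0 < h (fun _ : Fin N => (c : ℝ) / N) := by
      rw [hhdef]
      refine (Finset.lt_inf'_iff hU).2 fun k _ => ?_
      have := hMpos k
      positivity
    linarith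
  have hs1 : s < 1 := by
    by_contra hle
    push_neg at hle
    have hMle : ∀ k, M k ≤ xs k := by
      intro k
      have h2 : (1 : ℝ) ≤ xs k / M k :=
        le_trans hle (Finset.inf'_le (fun k => xs k / M k) (Finset.mem_univ k))
      have hMk := hMpos k
      rw [le_div_iff₀ hMk, one_mul] at h2
      exact h2
    have : xs = M := le_antisymm (fun k => hK_le xs hxsK k) (fun k => hMle k)
    exact hMnotK (this ▸ hxsK)
  -- the uniform bound
  set B : ℝ := (1 - ε) + ε * s with hBdef
  have hB1 : B < 1 := by nlinarith
  have hB0 : 0 < B := by nlinarith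
  refine ⟨B, hB1, ?_⟩
  intro μ₀ hμ₀
  apply Real.sSup_le _ (le_of_lt hB0)
  rintro ρ ⟨hρpos, hsub⟩
  -- pick a coordinate where μ₀ is small
  have hhμ : h μ₀ ≤ s := hxsmax hμ₀
  obtain ⟨k, -, hk⟩ := Finset.exists_mem_eq_inf' hU (fun k => μ₀ k / M k)
  have hμ₀k : μ₀ k ≤ s * M k := by
    have h1 : μ₀ k / M k ≤ s := by
      rw [hhdef] at hhμ
      rw [← hk]
      exact hhμ
    rw [div_le_iff₀ (hMpos k)] at h1
    linarith
  -- a schedule attaining M k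
  obtain ⟨ys, hysT, hys⟩ := Finset.exists_mem_eq_sup' hTne (fun d => d k)
  have hysS : ys ∈ Sched := hfin.mem_toFinset.1 hysT
  have key : ∀ δ : ℝ, 0 < δ → δ < 1 → ρ * (1 - δ) ≤ B := by
    intro δ hδ0 hδ1
    have hxΛ : (1 - δ) • ys ∈ maxCapRegion N Sched := by
      refine ⟨fun i => mul_nonneg (by linarith) (hSnn ys hysS i), ?_⟩
      refine ⟨(1 - δ) • ys + δ • (fun _ : Fin N => (c : ℝ) / N), ?_, ?_⟩
      · exact (convex_convexHull ℝ Sched) (subset_convexHull ℝ _ hysS) hu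
          (by linarith) (le_of_lt hδ0) (by ring)
      · intro i
        have hpos : 0 < (c : ℝ) / N := by positivity
        simp only [Pi.add_apply, Pi.smul_apply, smul_eq_mul]
        nlinarith
    have hmem : ρ • ((1 - δ) • ys) ∈ mixRegion N Sched ε μ₀ :=
      hsub (Set.smul_mem_smul_set hxΛ)
    obtain ⟨-, μ, hμK, hle⟩ := hmem
    have hlek := hle k
    simp only [Pi.smul_apply, Pi.add_apply, smul_eq_mul] at hlek
    have hyk : ys k = M k := hys.symm
    rw [hyk] at hlek
    have hμk := hK_le μ hμK k
    have hMk := hMpos k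
    have hfinal : ρ * (1 - δ) * M k ≤ B * M k := by nlinarith
    exact le_of_mul_le_mul_right (by linarith) hMk
  by_contra hgt
  push_neg at hgt
  have hδ0 : 0 < (ρ - B) / (2 * ρ) := by
    apply div_pos (by linarith) (by linarith)
  have hδ1 : (ρ - B) / (2 * ρ) < 1 := by
    rw [div_lt_one (by linarith)]
    linarith
  have hkey := key _ hδ0 hδ1
  have heq : ρ * (1 - (ρ - B) / (2 * ρ)) = (ρ + B) / 2 := by
    field_simp
    ring
  rw [heq] at hkey
  linarith
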